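/- Let γ = (γ_s)_{s≥1} be a sequence of reals with 0 < γ_s < 1/4, and let r_s, P_{2^s}, E_s, K(γ) be as in the weakly equilibrium Cantor set construction. Let s ≥ 1 and let x₀ ∈ (0,1) with x₀ ∉ E_s. Then P_{2^s}(x₀) + r_s/2 ≠ 0, and the polynomial R(x) := (P_{2^s}(x) + r_s/2) / (P_{2^s}(x₀) + r_s/2) satisfies R(x₀) = 1, deg R ≤ 2^s, and sup_{x ∈ K(γ)} |R(x)| ≤ sup_{x ∈ K(γ)} |Q(x)| for every real polynomial Q of degree at most 2^s with Q(x₀) = 1. -/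

import Mathlib

open Polynomial

/-- Band structure for the weakly equilibrium Cantor set construction:
`A j < B j` are the endpoints of the `j`-th band (`j < n`), on which `p` is strictly
monotone between the values `0` and `-ρ`. -/
def IsBands (p : Polynomial ℝ) (ρ : ℝ) (n : ℕ) (A B : ℕ → ℝ) : Prop :=
  A 0 = 0 ∧ B (n - 1) = 1 ∧
  (∀ j, j < n → A j < B j) ∧
  (∀ j, j + 1 < n → B j < A (j + 1)) ∧
  (∀ j, j < n → p.eval (A j) = if j % 2 = 0 then 0 else -ρ) ∧
  (∀ j, j < n → p.eval (B j) = if j % 2 = 0 then -ρ else 0) ∧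
  (∀ j, j < n → (j % 2 = 0 → StrictAntiOn (fun x => p.eval x) (Set.Icc (A j) (B j))) ∧
      (j % 2 ≠ 0 → StrictMonoOn (fun x => p.eval x) (Set.Icc (A j) (B j))))

lemma bands_range {p : Polynomial ℝ} {ρ : ℝ} {n : ℕ} {A B : ℕ → ℝ}
    (h : IsBands p ρ n A B) {j : ℕ} (hj : j < n) {x : ℝ}
    (hx : x ∈ Set.Icc (A j) (B j)) : -ρ ≤ p.eval x ∧ p.eval x ≤ 0 := by
  obtain ⟨-, -, hAB, -, hA, hB, hM⟩ := h
  have hab := (hAB j hj).le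
  have hmemA : A j ∈ Set.Icc (A j) (B j) := ⟨le_refl _, hab⟩
  have hmemB : B j ∈ Set.Icc (A j) (B j) := ⟨hab, le_refl _⟩
  have hA' := hA j hj
  have hB' := hB j hj
  by_cases hpar : j % 2 = 0
  · have hanti := ((hM j hj).1 hpar).antitoneOn
    have h1 := hanti hmemA hx hx.1
    have h2 := hanti hx hmemB hx.2
    simp only [hpar, if_true] at hA' hB'
    simp only at h1 h2
    rw [hA'] at h1; rw [hB'] at h2
    exact ⟨h2, h1⟩
  · have hmono := ((hM j hj).2 hpar).monotoneOn
    have h1 := hmono hmemA hx hx.1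
    have h2 := hmono hx hmemB hx.2
    simp only [hpar, if_false] at hA' hB'
    simp only at h1 h2
    rw [hA'] at h1; rw [hB'] at h2
    exact ⟨h1, h2⟩

set_option maxHeartbeats 1000000 in
lemma bands_step {p q : Polynomial ℝ} {ρ ρ' : ℝ} (hρ : 0 < ρ) (hρ' : 0 < ρ')
    (hdisc : 4 * ρ' < ρ ^ 2) (hq : q = p * (p + C ρ)) {n : ℕ} (hn : 0 < n)
    {A B : ℕ → ℝ} (h : IsBands p ρ n A B) :
    ∃ A' B', IsBands q ρ' (2 * n) A' B' := by
  obtain ⟨hA0, hB1, hAB, hBA, hA, hB, hM⟩ := h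
  have hD2 : (Real.sqrt (ρ ^ 2 - 4 * ρ')) ^ 2 = ρ ^ 2 - 4 * ρ' :=
    Real.sq_sqrt (by linarith)
  have hDpos : 0 < Real.sqrt (ρ ^ 2 - 4 * ρ') := Real.sqrt_pos.mpr (by linarith)
  have hDlt : Real.sqrt (ρ ^ 2 - 4 * ρ') < ρ := by nlinarith
  obtain ⟨y₁, y₂, hv1, hv2, h21, hhalf1, hhalf2, h1neg, h2gt⟩ :
      ∃ y₁ y₂ : ℝ, y₁ * (y₁ + ρ) = -ρ' ∧ y₂ * (y₂ + ρ) = -ρ' ∧ y₂ < y₁ ∧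
        -ρ / 2 ≤ y₁ ∧ y₂ ≤ -ρ / 2 ∧ y₁ < 0 ∧ -ρ < y₂ :=
    ⟨(-ρ + Real.sqrt (ρ ^ 2 - 4 * ρ')) / 2, (-ρ - Real.sqrt (ρ ^ 2 - 4 * ρ')) / 2,
      by linear_combination hD2 / 4, by linear_combination hD2 / 4,
      by linarith, by linarith, by linarith, by linarith, by linarith⟩
  have hcd : ∀ j, ∃ c d : ℝ, j < n →
      A j < c ∧ c < d ∧ d < B j ∧
      p.eval c = (if j % 2 = 0 then y₁ else y₂) ∧
      p.eval d = (if j % 2 = 0 then y₂ else y₁) := by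
    intro j
    by_cases hj : j < n
    swap
    · exact ⟨0, 0, fun h => absurd h hj⟩
    have hab := (hAB j hj).le
    have hcont : ContinuousOn (fun x => p.eval x) (Set.Icc (A j) (B j)) :=
      p.continuous.continuousOn
    by_cases hpar : j % 2 = 0
    · have hAv : p.eval (A j) = 0 := by simpa [hpar] using hA j hj
      have hBv : p.eval (B j) = -ρ := by simpa [hpar] using hB j hj
      have hanti := (hM j hj).1 hpar
      have h1 : y₁ ∈ Set.Ioo (p.eval (B j)) (p.eval (A j)) := by
        rw [hAv, hBv]; exact ⟨by linarith, by linarith⟩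
      obtain ⟨c, hcmem, hcv⟩ := intermediate_value_Ioo' hab hcont h1
      have h2 : y₂ ∈ Set.Ioo (p.eval (B j)) (p.eval (A j)) := by
        rw [hAv, hBv]; exact ⟨by linarith, by linarith⟩
      obtain ⟨d, hdmem, hdv⟩ := intermediate_value_Ioo' hab hcont h2
      simp only at hcv hdv
      refine ⟨c, d, fun _ => ⟨hcmem.1, ?_, hdmem.2, by simp [hpar, hcv], by simp [hpar, hdv]⟩⟩
      by_contra hcd'
      push_neg at hcd'
      have := hanti.antitoneOn ⟨hdmem.1.le, hdmem.2.le⟩ ⟨hcmem.1.le, hcmem.2.le⟩ hcd'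
      rw [hcv, hdv] at this; linarith
    · have hAv : p.eval (A j) = -ρ := by simpa [hpar] using hA j hj
      have hBv : p.eval (B j) = 0 := by simpa [hpar] using hB j hj
      have hmono := (hM j hj).2 hpar
      have h1 : y₂ ∈ Set.Ioo (p.eval (A j)) (p.eval (B j)) := by
        rw [hAv, hBv]; exact ⟨by linarith, by linarith⟩
      obtain ⟨c, hcmem, hcv⟩ := intermediate_value_Ioo hab hcont h1
      have h2 : y₁ ∈ Set.Ioo (p.eval (A j)) (p.eval (B j)) := by
        rw [hAv, hBv]; exact ⟨by linarith, by linarith⟩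
      obtain ⟨d, hdmem, hdv⟩ := intermediate_value_Ioo hab hcont h2
      simp only at hcv hdv
      refine ⟨c, d, fun _ => ⟨hcmem.1, ?_, hdmem.2, by simp [hpar, hcv], by simp [hpar, hdv]⟩⟩
      by_contra hcd'
      push_neg at hcd'
      have := hmono.monotoneOn ⟨hdmem.1.le, hdmem.2.le⟩ ⟨hcmem.1.le, hcmem.2.le⟩ hcd'
      rw [hcv, hdv] at this; linarith
  choose c d hcd using hcd
  refine ⟨fun i => if i % 2 = 0 then A (i / 2) else d (i / 2),
          fun i => if i % 2 = 0 then c (i / 2) else B (i / 2),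
          ?_, ?_, ?_, ?_, ?_, ?_, ?_⟩
  · simp [hA0]
  · have e1 : ¬((2 * n - 1) % 2 = 0) := by omega
    have e2 : (2 * n - 1) / 2 = n - 1 := by omega
    simp [e1, e2, hB1]
  · intro i hi
    have hj : i / 2 < n := by omega
    by_cases hpar : i % 2 = 0
    · simpa [hpar] using (hcd _ hj).1
    · simpa [hpar] using (hcd _ hj).2.2.1
  · intro i hi
    by_cases hpar : i % 2 = 0
    · have hj : i / 2 < n := by omega
      have e1 : ¬((i + 1) % 2 = 0) := by omega
      have e2 : (i + 1) / 2 = i / 2 := by omega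
      simpa [hpar, e1, e2] using (hcd _ hj).2.1
    · have hj : i / 2 + 1 < n := by omega
      have e1 : (i + 1) % 2 = 0 := by omega
      have e2 : (i + 1) / 2 = i / 2 + 1 := by omega
      simpa [hpar, e1, e2] using hBA (i / 2) hj
  · intro i hi
    have hj : i / 2 < n := by omega
    by_cases hpar : i % 2 = 0
    · -- q.eval (A (i/2)) = 0
      simp only [hpar, if_true, hq, eval_mul, eval_add, eval_C]
      have := hA (i / 2) hj
      by_cases hj2 : i / 2 % 2 = 0 <;> simp [hj2] at this <;> rw [this] <;> ring
    · -- q.eval (d (i/2)) = -ρ'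
      have hdv := (hcd _ hj).2.2.2.2
      simp only [hpar, if_false, hq, eval_mul, eval_add, eval_C]
      by_cases hj2 : i / 2 % 2 = 0 <;> simp [hj2] at hdv <;> rw [hdv]
      · linarith [hv2]
      · linarith [hv1]
  · intro i hi
    have hj : i / 2 < n := by omega
    by_cases hpar : i % 2 = 0
    · -- q.eval (c (i/2)) = -ρ'
      have hcv := (hcd _ hj).2.2.2.1
      simp only [hpar, if_true, hq, eval_mul, eval_add, eval_C]
      by_cases hj2 : i / 2 % 2 = 0 <;> simp [hj2] at hcv <;> rw [hcv]
      · linarith [hv1]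
      · linarith [hv2]
    · -- q.eval (B (i/2)) = 0
      simp only [hpar, if_false, hq, eval_mul, eval_add, eval_C]
      have := hB (i / 2) hj
      by_cases hj2 : i / 2 % 2 = 0 <;> simp [hj2] at this <;> rw [this] <;> ring
  · intro i hi
    have hj : i / 2 < n := by omega
    obtain ⟨hc1, hc2, hc3, hcv, hdv⟩ := hcd (i / 2) hj
    have habj := (hAB (i / 2) hj).le
    constructor
    · intro hpar
      simp only [hpar, if_true]
      -- StrictAntiOn q.eval on Icc (A j) (c j)
      intro x hx y hy hxy
      simp only [Set.mem_Icc] at hx hy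
      simp only [hq, eval_mul, eval_add, eval_C]
      by_cases hj2 : i / 2 % 2 = 0
      · have hanti := ((hM (i / 2) hj).1 hj2).antitoneOn
        have hAv : p.eval (A (i / 2)) = 0 := by simpa [hj2] using hA (i / 2) hj
        simp only [hj2, if_true] at hcv
        have hxm : x ∈ Set.Icc (A (i / 2)) (B (i / 2)) := ⟨hx.1, by linarith [hx.2]⟩
        have hym : y ∈ Set.Icc (A (i / 2)) (B (i / 2)) := ⟨hy.1, by linarith [hy.2]⟩
        have hcm : c (i / 2) ∈ Set.Icc (A (i / 2)) (B (i / 2)) := ⟨hc1.le, by linarith⟩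
        have hb1 : p.eval y ≤ p.eval (A (i / 2)) := hanti ⟨le_refl _, habj⟩ hym hy.1
        have hb2 : p.eval (c (i / 2)) ≤ p.eval y := hanti hym hcm hy.2
        have hb3 : p.eval y < p.eval x := ((hM (i / 2) hj).1 hj2) hxm hym hxy
        rw [hAv] at hb1; rw [hcv] at hb2
        nlinarith [mul_pos (sub_pos.mpr hb3)
          (show (0:ℝ) < p.eval x + p.eval y + ρ by linarith)]
      · have hmono := ((hM (i / 2) hj).2 hj2).monotoneOn
        have hAv : p.eval (A (i / 2)) = -ρ := by simpa [hj2] using hA (i / 2) hj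
        simp only [hj2, if_false] at hcv
        have hxm : x ∈ Set.Icc (A (i / 2)) (B (i / 2)) := ⟨hx.1, by linarith [hx.2]⟩
        have hym : y ∈ Set.Icc (A (i / 2)) (B (i / 2)) := ⟨hy.1, by linarith [hy.2]⟩
        have hcm : c (i / 2) ∈ Set.Icc (A (i / 2)) (B (i / 2)) := ⟨hc1.le, by linarith⟩
        have hb1 : p.eval (A (i / 2)) ≤ p.eval x := hmono ⟨le_refl _, habj⟩ hxm hx.1
        have hb2 : p.eval y ≤ p.eval (c (i / 2)) := hmono hym hcm hy.2
        have hb3 : p.eval x < p.eval y := ((hM (i / 2) hj).2 hj2) hxm hym hxy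
        rw [hAv] at hb1; rw [hcv] at hb2
        nlinarith [mul_pos (sub_pos.mpr hb3)
          (show (0:ℝ) < -(p.eval x + p.eval y + ρ) by linarith)]
    · intro hpar
      simp only [hpar, if_false]
      -- StrictMonoOn q.eval on Icc (d j) (B j)
      intro x hx y hy hxy
      simp only [Set.mem_Icc] at hx hy
      simp only [hq, eval_mul, eval_add, eval_C]
      by_cases hj2 : i / 2 % 2 = 0
      · have hanti := ((hM (i / 2) hj).1 hj2).antitoneOn
        have hBv : p.eval (B (i / 2)) = -ρ := by simpa [hj2] using hB (i / 2) hj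
        simp only [hj2, if_true] at hdv
        have hxm : x ∈ Set.Icc (A (i / 2)) (B (i / 2)) := ⟨by linarith [hx.1], hx.2⟩
        have hym : y ∈ Set.Icc (A (i / 2)) (B (i / 2)) := ⟨by linarith [hy.1], hy.2⟩
        have hdm : d (i / 2) ∈ Set.Icc (A (i / 2)) (B (i / 2)) := ⟨by linarith, hc3.le⟩
        have hb1 : p.eval (B (i / 2)) ≤ p.eval x := hanti hxm ⟨habj, le_refl _⟩ hx.2
        have hb2 : p.eval x ≤ p.eval (d (i / 2)) := hanti hdm hxm hx.1
        have hb3 : p.eval y < p.eval x := ((hM (i / 2) hj).1 hj2) hxm hym hxy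
        rw [hBv] at hb1; rw [hdv] at hb2
        nlinarith [mul_pos (sub_pos.mpr hb3)
          (show (0:ℝ) < -(p.eval x + p.eval y + ρ) by linarith)]
      · have hmono := ((hM (i / 2) hj).2 hj2).monotoneOn
        have hBv : p.eval (B (i / 2)) = 0 := by simpa [hj2] using hB (i / 2) hj
        simp only [hj2, if_false] at hdv
        have hxm : x ∈ Set.Icc (A (i / 2)) (B (i / 2)) := ⟨by linarith [hx.1], hx.2⟩
        have hym : y ∈ Set.Icc (A (i / 2)) (B (i / 2)) := ⟨by linarith [hy.1], hy.2⟩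
        have hdm : d (i / 2) ∈ Set.Icc (A (i / 2)) (B (i / 2)) := ⟨by linarith, hc3.le⟩
        have hb1 : p.eval x ≤ p.eval (B (i / 2)) := hmono hxm ⟨habj, le_refl _⟩ hx.2
        have hb2 : p.eval (d (i / 2)) ≤ p.eval x := hmono hdm hxm hx.1
        have hb3 : p.eval x < p.eval y := ((hM (i / 2) hj).2 hj2) hxm hym hxy
        rw [hBv] at hb1; rw [hdv] at hb2
        nlinarith [mul_pos (sub_pos.mpr hb3)
          (show (0:ℝ) < p.eval x + p.eval y + ρ by linarith)]

lemma bands_base {ρ : ℝ} (h0 : 0 < ρ) (h4 : ρ < 1 / 4) :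
    ∃ A B, IsBands (X * (X - 1) : Polynomial ℝ) ρ 2 A B := by
  have hD2 : (Real.sqrt (1 - 4 * ρ)) ^ 2 = 1 - 4 * ρ := Real.sq_sqrt (by linarith)
  have hDpos : 0 < Real.sqrt (1 - 4 * ρ) := Real.sqrt_pos.mpr (by linarith)
  have hDlt : Real.sqrt (1 - 4 * ρ) < 1 := by nlinarith
  have heval : ∀ x : ℝ, (X * (X - 1) : Polynomial ℝ).eval x = x * (x - 1) := by
    intro x; simp
  refine ⟨fun j => if j = 0 then 0 else (1 + Real.sqrt (1 - 4 * ρ)) / 2,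
          fun j => if j = 0 then (1 - Real.sqrt (1 - 4 * ρ)) / 2 else 1,
          by simp, by simp, ?_, ?_, ?_, ?_, ?_⟩
  · intro j hj
    interval_cases j <;> simp <;> linarith
  · intro j hj
    have hj0 : j = 0 := by omega
    subst hj0; simp; linarith
  · intro j hj
    interval_cases j <;> simp [heval]
    linear_combination hD2 / 4
  · intro j hj
    interval_cases j <;> simp [heval]
    linear_combination hD2 / 4
  · intro j hj
    interval_cases j <;> constructor
    · intro _
      intro x hx y hy hxy
      simp only [Set.mem_Icc, reduceIte, one_ne_zero, if_false, if_neg, ne_eq, not_false_eq_true] at hx hy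
      simp only [heval]
      nlinarith [hx.1, hy.2, hx.2]
    · intro hc; exact absurd rfl hc
    · intro hc; exact absurd hc (by omega)
    · intro _
      intro x hx y hy hxy
      simp only [Set.mem_Icc, reduceIte, one_ne_zero, if_false, if_neg, ne_eq, not_false_eq_true] at hx hy
      simp only [heval]
      nlinarith [hx.1, hy.2, hy.1]


lemma bands_exist (γ : ℕ → ℝ) (hγ : ∀ s, 1 ≤ s → 0 < γ s ∧ γ s < 1 / 4)
    (r : ℕ → ℝ) (hr0 : r 0 = 1) (hr : ∀ s, 1 ≤ s → r s = γ s * (r (s - 1)) ^ 2)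
    (P : ℕ → Polynomial ℝ) (hP1 : P 1 = X * (X - 1))
    (hP : ∀ s, 1 ≤ s → P (s + 1) = P s * (P s + C (r s)))
    (hrpos : ∀ t, 0 < r t) :
    ∀ s, 1 ≤ s → ∃ A B, IsBands (P s) (r s) (2 ^ s) A B := by
  intro s hs
  induction s, hs using Nat.le_induction with
  | base =>
    have h1 : r 1 = γ 1 := by rw [hr 1 le_rfl]; simp [hr0]
    rw [hP1, pow_one]
    exact bands_base (by rw [h1]; exact (hγ 1 le_rfl).1)
      (by rw [h1]; exact (hγ 1 le_rfl).2)
  | succ k hk ih =>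
    obtain ⟨A, B, hAB⟩ := ih
    have hrk1 : r (k + 1) = γ (k + 1) * (r k) ^ 2 := by rw [hr (k + 1) (by omega)]; simp
    have hdisc : 4 * r (k + 1) < (r k) ^ 2 := by
      rw [hrk1]
      nlinarith [(hγ (k + 1) (by omega)).2, hrpos k, pow_pos (hrpos k) 2]
    obtain ⟨A', B', h'⟩ := bands_step (hrpos k) (hrpos (k + 1)) hdisc (hP k hk)
      (by positivity : 0 < 2 ^ k) hAB
    exact ⟨A', B', by rwa [show 2 ^ (k + 1) = 2 * 2 ^ k from by ring]⟩

set_option maxHeartbeats 1000000 in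
/-- In the weakly equilibrium Cantor set construction, let `s ≥ 1` and
`x₀ ∈ (0,1)` with `x₀ ∉ E s`. Then `P s (x₀) + r s / 2 ≠ 0`, and the polynomial
`R(x) := (P s (x) + r s / 2) / (P s (x₀) + r s / 2)` satisfies `R(x₀) = 1`,
`deg R ≤ 2^s`, and `sup_{x ∈ K(γ)} |R(x)| ≤ sup_{x ∈ K(γ)} |Q(x)|` for every real
polynomial `Q` of degree at most `2^s` with `Q(x₀) = 1`. -/
theorem stmt18 (γ : ℕ → ℝ) (hγ : ∀ s, 1 ≤ s → 0 < γ s ∧ γ s < 1 / 4)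
    (r : ℕ → ℝ) (hr0 : r 0 = 1)
    (hr : ∀ s, 1 ≤ s → r s = γ s * (r (s - 1)) ^ 2)
    (P : ℕ → Polynomial ℝ) (hP1 : P 1 = X * (X - 1))
    (hP : ∀ s, 1 ≤ s → P (s + 1) = P s * (P s + C (r s)))
    (E : ℕ → Set ℝ)
    (hE : ∀ s, 1 ≤ s → E s = {x : ℝ | -(r s) ≤ (P s).eval x ∧ (P s).eval x ≤ 0})
    (K : Set ℝ) (hK : K = ⋂ s ∈ Set.Ici 1, E s)
    (s : ℕ) (hs : 1 ≤ s)
    (x₀ : ℝ) (hx₀ : x₀ ∈ Set.Ioo (0 : ℝ) 1) (hx₀E : x₀ ∉ E s) :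
    (P s).eval x₀ + r s / 2 ≠ 0 ∧
    ∀ R : Polynomial ℝ,
      R = C ((P s).eval x₀ + r s / 2)⁻¹ * (P s + C (r s / 2)) →
      R.eval x₀ = 1 ∧ R.natDegree ≤ 2 ^ s ∧
      ∀ Q : Polynomial ℝ, Q.natDegree ≤ 2 ^ s → Q.eval x₀ = 1 →
        sSup ((fun x => |R.eval x|) '' K) ≤ sSup ((fun x => |Q.eval x|) '' K) := by
  have hrpos : ∀ t, 0 < r t := by
    intro t
    induction t with
    | zero => rw [hr0]; norm_num
    | succ k ih =>
      rw [hr (k + 1) (by omega)]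
      simp only [Nat.add_sub_cancel]
      exact mul_pos (hγ (k + 1) (by omega)).1 (pow_pos ih 2)
  have hEsub : ∀ t, 1 ≤ t → E (t + 1) ⊆ E t := by
    intro t ht x hx
    rw [hE (t + 1) (by omega), Set.mem_setOf_eq] at hx
    rw [hE t ht, Set.mem_setOf_eq]
    obtain ⟨h1, h2⟩ := hx
    rw [hP t ht, eval_mul, eval_add, eval_C] at h2
    have hrt := hrpos t
    constructor
    · nlinarith [h2]
    · nlinarith [h2]
  have hEchain : ∀ t u, 1 ≤ t → t ≤ u → E u ⊆ E t := by
    intro t u ht htu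
    induction htu with
    | refl => exact subset_rfl
    | @step m h ih => exact (hEsub m (le_trans ht h)).trans ih
  have hKE : ∀ t, 1 ≤ t → K ⊆ E t := by
    intro t ht
    rw [hK]
    exact Set.biInter_subset_of_mem (Set.mem_Ici.mpr ht)
  have hPzero : ∀ x t, 1 ≤ t → (P t).eval x = 0 → ∀ u, t ≤ u → (P u).eval x = 0 := by
    intro x t ht h0 u htu
    induction htu with
    | refl => exact h0
    | @step m h ih => rw [hP m (le_trans ht h), eval_mul, ih]; ring
  have hvalK : ∀ x, ((P s).eval x = 0 ∨ (P s).eval x = -(r s)) → x ∈ K := by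
    intro x hv
    rw [hK]
    refine Set.mem_iInter₂.mpr fun t ht => ?_
    rcases le_or_gt t s with hts | hst
    · refine hEchain t s ht hts ?_
      rw [hE s hs, Set.mem_setOf_eq]
      rcases hv with h | h <;> rw [h] <;> constructor <;> linarith [hrpos s]
    · have h1 : (P (s + 1)).eval x = 0 := by
        rw [hP s hs, eval_mul, eval_add, eval_C]
        rcases hv with h | h <;> rw [h] <;> ring
      have h2 := hPzero x (s + 1) (by omega) h1 t hst
      rw [hE t ht, Set.mem_setOf_eq, h2]
      exact ⟨by linarith [hrpos t], le_refl 0⟩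
  have hx₀E' : 0 < (P s).eval x₀ ∨ (P s).eval x₀ < -(r s) := by
    rw [hE s hs] at hx₀E
    simp only [Set.mem_setOf_eq, not_and_or, not_le] at hx₀E
    tauto
  have hdabs : r s / 2 < |(P s).eval x₀ + r s / 2| := by
    rcases hx₀E' with h | h
    · rw [abs_of_pos (by linarith [hrpos s])]; linarith
    · rw [abs_of_neg (by linarith [hrpos s])]; linarith
  have hdne : (P s).eval x₀ + r s / 2 ≠ 0 := by
    intro h; rw [h, abs_zero] at hdabs; linarith [hrpos s]
  refine ⟨hdne, fun R hR => ?_⟩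
  have hReval : ∀ x, R.eval x = ((P s).eval x₀ + r s / 2)⁻¹ * ((P s).eval x + r s / 2) := by
    intro x; rw [hR]; simp [eval_mul, eval_add, eval_C]
  have hPdeg : ∀ t, 1 ≤ t → (P t).natDegree ≤ 2 ^ t := by
    intro t ht
    induction t, ht using Nat.le_induction with
    | base =>
      rw [hP1]
      calc (X * (X - 1) : Polynomial ℝ).natDegree
          ≤ (X : Polynomial ℝ).natDegree + (X - 1 : Polynomial ℝ).natDegree :=
            natDegree_mul_le
        _ ≤ 1 + 1 := by
            refine add_le_add (le_of_eq natDegree_X) ?_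
            refine le_trans (natDegree_sub_le _ _) ?_
            simp [natDegree_X, natDegree_one]
        _ ≤ 2 ^ 1 := by norm_num
    | succ k hk ih =>
      rw [hP k hk]
      refine le_trans natDegree_mul_le ?_
      calc (P k).natDegree + (P k + C (r k)).natDegree
          ≤ 2 ^ k + 2 ^ k := by
            refine add_le_add ih (le_trans (natDegree_add_le _ _) ?_)
            exact max_le ih (by simp [natDegree_C])
        _ = 2 ^ (k + 1) := by ring
  have hRx₀ : R.eval x₀ = 1 := by rw [hReval]; exact inv_mul_cancel₀ hdne
  have hRdeg : R.natDegree ≤ 2 ^ s := by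
    rw [hR]
    refine le_trans natDegree_mul_le ?_
    rw [natDegree_C, zero_add]
    exact le_trans (natDegree_add_le _ _) (max_le (hPdeg s hs) (by simp [natDegree_C]))
  refine ⟨hRx₀, hRdeg, ?_⟩
  intro Q hQdeg hQ1
  by_contra hcon
  push_neg at hcon
  obtain ⟨σ, hσ⟩ : ∃ σ : ℝ, σ = ((P s).eval x₀ + r s / 2)⁻¹ * (r s / 2) := ⟨_, rfl⟩
  have habsd : 0 < |(P s).eval x₀ + r s / 2| := abs_pos.mpr hdne
  have hσabs : |σ| = |(P s).eval x₀ + r s / 2|⁻¹ * (r s / 2) := by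
    rw [hσ, abs_mul, abs_inv, abs_of_pos (by linarith [hrpos s] : (0:ℝ) < r s / 2)]
  have hσpos : 0 < |σ| := by
    rw [hσabs]; exact mul_pos (inv_pos.mpr habsd) (by linarith [hrpos s])
  have hRK : ∀ x ∈ K, |R.eval x| ≤ |σ| := by
    intro x hx
    have hxE : x ∈ E s := hKE s hs hx
    rw [hE s hs, Set.mem_setOf_eq] at hxE
    rw [hReval, abs_mul, abs_inv, hσabs]
    refine mul_le_mul_of_nonneg_left ?_ (by positivity)
    rw [abs_le]
    constructor <;> linarith [hxE.1, hxE.2]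
  have hsupR : sSup ((fun x => |R.eval x|) '' K) ≤ |σ| :=
    Real.sSup_le (by rintro y ⟨x, hx, rfl⟩; exact hRK x hx) hσpos.le
  have hKicc : K ⊆ Set.Icc (0:ℝ) 1 := by
    intro x hx
    have hxE : x ∈ E 1 := hKE 1 le_rfl hx
    rw [hE 1 le_rfl, Set.mem_setOf_eq, hP1] at hxE
    simp only [eval_mul, eval_sub, eval_X, eval_one] at hxE
    constructor
    · by_contra hc; push_neg at hc; nlinarith [hxE.2]
    · by_contra hc; push_neg at hc; nlinarith [hxE.2]
  have hbddQ : BddAbove ((fun x => |Q.eval x|) '' K) := by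
    refine BddAbove.mono (Set.image_mono hKicc) ?_
    exact (isCompact_Icc.image (Q.continuous.abs)).bddAbove
  have hQK : ∀ x ∈ K, |Q.eval x| < |σ| := by
    intro x hx
    have h1 : |Q.eval x| ≤ sSup ((fun x => |Q.eval x|) '' K) :=
      le_csSup hbddQ ⟨x, hx, rfl⟩
    calc |Q.eval x| ≤ _ := h1
      _ < sSup ((fun x => |R.eval x|) '' K) := hcon
      _ ≤ |σ| := hsupR
  obtain ⟨A, B, hbands⟩ := bands_exist γ hγ r hr0 hr P hP1 hP hrpos s hs
  have hbands' := hbands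
  obtain ⟨hA0, hB1, hAB, hBA, hAv, hBv, hM⟩ := hbands'
  have hn2 : 2 ≤ 2 ^ s := by
    calc 2 = 2 ^ 1 := rfl
      _ ≤ 2 ^ s := Nat.pow_le_pow_right (by norm_num) hs
  have hAK : ∀ j, j < 2 ^ s → A j ∈ K := by
    intro j hj
    apply hvalK
    have h := hAv j hj
    by_cases hj2 : j % 2 = 0
    · left; simpa [hj2] using h
    · right; simpa [hj2] using h
  have hBK : ∀ j, j < 2 ^ s → B j ∈ K := by
    intro j hj
    apply hvalK
    have h := hBv j hj
    by_cases hj2 : j % 2 = 0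
    · right; simpa [hj2] using h
    · left; simpa [hj2] using h
  have hbandE : ∀ j, j < 2 ^ s → ∀ x, A j ≤ x → x ≤ B j → x ∈ E s := by
    intro j hj x h1 h2
    rw [hE s hs, Set.mem_setOf_eq]
    exact bands_range hbands hj ⟨h1, h2⟩
  have hRA : ∀ j, j < 2 ^ s → R.eval (A j) = (if j % 2 = 0 then σ else -σ) := by
    intro j hj
    rw [hReval]
    have h := hAv j hj
    by_cases hj2 : j % 2 = 0 <;> simp only [hj2, if_true, if_false] at h ⊢ <;>
      rw [h, hσ] <;> ring
  have hRB : ∀ j, j < 2 ^ s → R.eval (B j) = (if j % 2 = 0 then -σ else σ) := by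
    intro j hj
    rw [hReval]
    have h := hBv j hj
    by_cases hj2 : j % 2 = 0 <;> simp only [hj2, if_true, if_false] at h ⊢ <;>
      rw [h, hσ] <;> ring
  have hDA : ∀ j, j < 2 ^ s →
      (R.eval (A j) - Q.eval (A j)) * (R.eval (B j) - Q.eval (B j)) < 0 := by
    intro j hj
    have hQA := hQK (A j) (hAK j hj)
    have hQB := hQK (B j) (hBK j hj)
    have h1 := hRA j hj
    have h2 := hRB j hj
    rw [abs_lt] at hQA hQB
    by_cases hj2 : j % 2 = 0 <;> simp only [hj2, if_true, if_false] at h1 h2 <;>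
      rw [h1, h2] <;>
      rcases abs_cases σ with ⟨he, _⟩ | ⟨he, _⟩ <;> rw [he] at hQA hQB <;>
      nlinarith [hQA.1, hQA.2, hQB.1, hQB.2, hσpos]
  have hzex : ∀ j, ∃ z, j < 2 ^ s → z ∈ Set.Ioo (A j) (B j) ∧ (R - Q).eval z = 0 := by
    intro j
    by_cases hj : j < 2 ^ s
    swap
    · exact ⟨0, fun h => absurd h hj⟩
    have hcont : ContinuousOn (fun x => (R - Q).eval x) (Set.Icc (A j) (B j)) :=
      (R - Q).continuous.continuousOn
    have hab := (hAB j hj).le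
    have hprod := hDA j hj
    have hDAeq : (R - Q).eval (A j) = R.eval (A j) - Q.eval (A j) := by simp
    have hDBeq : (R - Q).eval (B j) = R.eval (B j) - Q.eval (B j) := by simp
    rcases mul_neg_iff.mp hprod with ⟨hpos, hneg⟩ | ⟨hneg, hpos⟩
    · have h0 : (0:ℝ) ∈ Set.Ioo ((R - Q).eval (B j)) ((R - Q).eval (A j)) := by
        rw [hDAeq, hDBeq]; exact ⟨by linarith, by linarith⟩
      obtain ⟨zz, hzz, hzz0⟩ := intermediate_value_Ioo' hab hcont h0
      exact ⟨zz, fun _ => ⟨hzz, hzz0⟩⟩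
    · have h0 : (0:ℝ) ∈ Set.Ioo ((R - Q).eval (A j)) ((R - Q).eval (B j)) := by
        rw [hDAeq, hDBeq]; exact ⟨by linarith, by linarith⟩
      obtain ⟨zz, hzz, hzz0⟩ := intermediate_value_Ioo hab hcont h0
      exact ⟨zz, fun _ => ⟨hzz, hzz0⟩⟩
  choose z hz using hzex
  have hBAlt : ∀ i j, i < j → j < 2 ^ s → B i < A j := by
    intro i j hij hjn
    induction j with
    | zero => omega
    | succ k ih =>
      rcases Nat.lt_succ_iff_lt_or_eq.mp hij with h | h
      · have h1 : B i < A k := ih h (by omega)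
        have h2 : A k < B k := hAB k (by omega)
        have h3 : B k < A (k + 1) := hBA k hjn
        linarith
      · subst h
        exact hBA i hjn
  have hgap : ∃ g, g + 1 < 2 ^ s ∧ B g < x₀ ∧ x₀ < A (g + 1) := by
    have hstart : B 0 < x₀ := by
      rcases lt_or_ge (B 0) x₀ with h | h
      · exact h
      · exact absurd (hbandE 0 (by omega) x₀ (by rw [hA0]; exact hx₀.1.le) h) hx₀E
    have key : ∀ m j, j < 2 ^ s → 2 ^ s - j ≤ m → B j < x₀ →
        ∃ g, g + 1 < 2 ^ s ∧ B g < x₀ ∧ x₀ < A (g + 1) := by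
      intro m
      induction m with
      | zero => intro j hj hm _; omega
      | succ m ih =>
        intro j hj hm hBj
        have hj1 : j + 1 < 2 ^ s := by
          by_contra hc
          have hje : j = 2 ^ s - 1 := by omega
          rw [hje, hB1] at hBj
          linarith [hx₀.2]
        rcases lt_or_ge x₀ (A (j + 1)) with hx | hx
        · exact ⟨j, hj1, hBj, hx⟩
        · have hlt : B (j + 1) < x₀ := by
            rcases lt_or_ge (B (j + 1)) x₀ with h | h
            · exact h
            · exact absurd (hbandE (j + 1) hj1 x₀ hx h) hx₀E
          exact ih (j + 1) hj1 (by omega) hlt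
    exact key (2 ^ s) 0 (by omega) (by omega) hstart
  obtain ⟨g, hg1, hgB, hgA⟩ := hgap
  have hx₀z : ∀ j, j < 2 ^ s → z j ≠ x₀ := by
    intro j hj
    have hzj := hz j hj
    rcases le_or_gt j g with h | h
    · have h1 : z j < B j := hzj.1.2
      have h2 : B j ≤ B g := by
        rcases Nat.eq_or_lt_of_le h with h' | h'
        · rw [h']
        · have := hBAlt j g h' (by omega)
          have := hAB g (by omega)
          linarith
      intro hc; rw [hc] at h1; linarith
    · have h1 : A j < z j := hzj.1.1
      have h2 : A (g + 1) ≤ A j := by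
        rcases Nat.eq_or_lt_of_le (show g + 1 ≤ j by omega) with h' | h'
        · rw [h']
        · have := hBAlt (g + 1) j h' hj
          have := hAB (g + 1) hg1
          linarith
      intro hc; rw [hc] at h1; linarith
  have hDne : R - Q ≠ 0 := by
    intro hc
    have h00 := hDA 0 (by omega)
    have hRQ : R = Q := sub_eq_zero.mp hc
    rw [hRQ, sub_self, zero_mul] at h00
    exact absurd h00 (by norm_num)
  have hroots : ∀ j, j < 2 ^ s → z j ∈ (R - Q).roots := by
    intro j hj
    exact mem_roots'.mpr ⟨hDne, (hz j hj).2⟩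
  have hx₀root : x₀ ∈ (R - Q).roots :=
    mem_roots'.mpr ⟨hDne, by simp [IsRoot, hRx₀, hQ1]⟩
  have hzinj : Set.InjOn z ↑(Finset.range (2 ^ s)) := by
    intro i hi j hj hij
    simp only [Finset.coe_range, Set.mem_Iio] at hi hj
    by_contra hne
    rcases Nat.lt_or_ge i j with h | h
    · have h1 : z i < B i := (hz i hi).1.2
      have h2 : B i < A j := hBAlt i j h hj
      have h3 : A j < z j := (hz j hj).1.1
      rw [hij] at h1; linarith
    · have h' : j < i := by omega
      have h1 : z j < B j := (hz j hj).1.2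
      have h2 : B j < A i := hBAlt j i h' hi
      have h3 : A i < z i := (hz i hi).1.1
      rw [hij] at h3; linarith
  have hcard : 2 ^ s + 1 ≤ (insert x₀ ((Finset.range (2 ^ s)).image z)).card := by
    have h1 : ((Finset.range (2 ^ s)).image z).card = 2 ^ s := by
      rw [Finset.card_image_of_injOn hzinj, Finset.card_range]
    have h2 : x₀ ∉ (Finset.range (2 ^ s)).image z := by
      simp only [Finset.mem_image, Finset.mem_range]
      rintro ⟨j, hj, hjz⟩
      exact hx₀z j hj hjz
    rw [Finset.card_insert_of_notMem h2, h1]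
  have hsub : insert x₀ ((Finset.range (2 ^ s)).image z) ⊆ (R - Q).roots.toFinset := by
    intro x hx
    rw [Multiset.mem_toFinset]
    rcases Finset.mem_insert.mp hx with h | h
    · rw [h]; exact hx₀root
    · obtain ⟨j, hj, rfl⟩ := Finset.mem_image.mp h
      exact hroots j (Finset.mem_range.mp hj)
  have hfinal : 2 ^ s + 1 ≤ 2 ^ s := by
    calc 2 ^ s + 1 ≤ (insert x₀ ((Finset.range (2 ^ s)).image z)).card := hcard
      _ ≤ (R - Q).roots.toFinset.card := Finset.card_le_card hsub
      _ ≤ Multiset.card (R - Q).roots := Multiset.toFinset_card_le _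
      _ ≤ (R - Q).natDegree := (R - Q).card_roots'
      _ ≤ 2 ^ s := le_trans (natDegree_sub_le R Q) (max_le hRdeg hQdeg)
  omega
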